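/- (Trace expansion of the coefficient–coefficient FIM term in Θ, eq. (46).) Let ψ, a ∈ ℂ^N, G ∈ ℂ^{N×M}, and R_s, W ∈ ℂ^{M×M}. Set A = diag(a), Θ = ψψ^H, H = G^T A ψψ^T A G, R_1 = A G R_s G^H A^H, and R_2 = A^H G^* W G^T A (where G^* is the entrywise complex conjugate of G). Then tr( H^H W H R_s ) = tr(R_1 Θ^T) · tr(R_2 Θ). -/
import Mathlib


open Matrix Complex

section Aux

variable {l m n p : Type*} [Fintype m] [Fintype n] [Fintype p]

private lemma aux_mul_vecMulVec (B : Matrix l m ℂ) (u : m → ℂ) (v : n → ℂ) :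
    B * Matrix.vecMulVec u v = Matrix.vecMulVec (B *ᵥ u) v := by
  ext i j
  simp [Matrix.mul_apply, Matrix.vecMulVec_apply, Matrix.mulVec, dotProduct,
    Finset.sum_mul, mul_assoc]

private lemma aux_vecMulVec_mul (u : l → ℂ) (v : m → ℂ) (B : Matrix m n ℂ) :
    Matrix.vecMulVec u v * B = Matrix.vecMulVec u (v ᵥ* B) := by
  ext i j
  simp [Matrix.mul_apply, Matrix.vecMulVec_apply, Matrix.vecMul, dotProduct,
    Finset.mul_sum, mul_assoc]

private lemma aux_vecMulVec_conjT (u : l → ℂ) (v : m → ℂ) :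
    (Matrix.vecMulVec u v)ᴴ = Matrix.vecMulVec (star v) (star u) := by
  ext i j
  simp [Matrix.conjTranspose_apply, Matrix.vecMulVec_apply, mul_comm]

private lemma aux_vecMulVec_transpose (u : l → ℂ) (v : m → ℂ) :
    (Matrix.vecMulVec u v)ᵀ = Matrix.vecMulVec v u := by
  ext i j
  simp [Matrix.vecMulVec_apply, mul_comm]

private lemma aux_vecMulVec_mul_vecMulVec (u : l → ℂ) (v : m → ℂ) (w : m → ℂ) (z : n → ℂ) :
    Matrix.vecMulVec u v * Matrix.vecMulVec w z
      = (v ⬝ᵥ w) • Matrix.vecMulVec u z := by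
  ext i j
  simp only [Matrix.mul_apply, Matrix.vecMulVec_apply, Matrix.smul_apply,
    dotProduct, Finset.sum_mul, smul_eq_mul]
  exact Finset.sum_congr rfl fun k _ => by ring

private lemma aux_trace_vecMulVec (u v : n → ℂ) :
    Matrix.trace (Matrix.vecMulVec u v) = u ⬝ᵥ v := by
  simp [Matrix.trace, Matrix.diag, Matrix.vecMulVec_apply, dotProduct]

end Aux

/-- trace expansion of the coefficient–coefficient FIM term in `Θ`, eq. (46):
with `A = diag(a)`, `Θ = ψψᴴ`, `H = Gᵀ A ψψᵀ A G`, `R₁ = A G R_s Gᴴ Aᴴ`, and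
`R₂ = Aᴴ G* W Gᵀ A`, `tr(Hᴴ W H R_s) = tr(R₁Θᵀ)·tr(R₂Θ)`. -/
theorem stmt18 (N M : ℕ) (ψ a : Fin N → ℂ)
    (G : Matrix (Fin N) (Fin M) ℂ) (Rs W : Matrix (Fin M) (Fin M) ℂ)
    (A Θ : Matrix (Fin N) (Fin N) ℂ)
    (hA : A = Matrix.diagonal a) (hΘ : Θ = Matrix.vecMulVec ψ (star ψ))
    (H : Matrix (Fin M) (Fin M) ℂ)
    (hH : H = Gᵀ * A * Matrix.vecMulVec ψ ψ * A * G)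
    (R1 R2 : Matrix (Fin N) (Fin N) ℂ)
    (hR1 : R1 = A * G * Rs * Gᴴ * Aᴴ)
    (hR2 : R2 = Aᴴ * G.map (starRingEnd ℂ) * W * Gᵀ * A) :
    Matrix.trace (Hᴴ * W * H * Rs)
      = Matrix.trace (R1 * Θᵀ) * Matrix.trace (R2 * Θ) := by
  subst hA hΘ hH hR1 hR2
  set D : Matrix (Fin N) (Fin N) ℂ := Matrix.diagonal a with hD
  set Gc : Matrix (Fin N) (Fin M) ℂ := G.map (starRingEnd ℂ) with hGc
  set x : Fin M → ℂ := ψ ᵥ* (D * G) with hx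
  -- basic facts
  have hDT : Dᵀ = D := Matrix.diagonal_transpose a
  have hDHT : Dᴴᵀ = Dᴴ := by
    rw [hD, Matrix.diagonal_conjTranspose, Matrix.diagonal_transpose]
  have hGHT : Gᴴᵀ = Gc := by
    ext i j
    simp [Matrix.conjTranspose_apply, hGc]
  have hGDT : Gᵀ * D = (D * G)ᵀ := by rw [Matrix.transpose_mul, hDT]
  have hGDψ : (Gᵀ * D) *ᵥ ψ = x := by rw [hGDT, Matrix.mulVec_transpose, hx]
  have hsx : star x = (Gᴴ * Dᴴ) *ᵥ star ψ := by
    rw [hx, Matrix.star_vecMul, Matrix.conjTranspose_mul]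
  have hsx' : star ψ ᵥ* (Dᴴ * Gc) = star x := by
    rw [hsx, ← Matrix.vecMul_transpose, Matrix.transpose_mul, hDHT, hGHT]
  -- H = x xᵀ
  have hHx : Gᵀ * D * Matrix.vecMulVec ψ ψ * D * G = Matrix.vecMulVec x x := by
    rw [aux_mul_vecMulVec, aux_vecMulVec_mul, aux_vecMulVec_mul, hGDψ, hx,
      Matrix.vecMul_vecMul]
  -- left-hand side
  have hLHS : Matrix.trace ((Gᵀ * D * Matrix.vecMulVec ψ ψ * D * G)ᴴ * W *
        (Gᵀ * D * Matrix.vecMulVec ψ ψ * D * G) * Rs)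
      = (star x ⬝ᵥ (W *ᵥ x)) * (x ⬝ᵥ (Rs *ᵥ star x)) := by
    rw [hHx, aux_vecMulVec_conjT, aux_vecMulVec_mul, aux_vecMulVec_mul_vecMulVec,
      smul_mul_assoc, Matrix.trace_smul, aux_vecMulVec_mul, aux_trace_vecMulVec,
      smul_eq_mul]
    congr 1
    · rw [Matrix.dotProduct_mulVec]
    · rw [dotProduct_comm, Matrix.dotProduct_mulVec]
  -- first trace on the right-hand side
  have h1 : Matrix.trace (D * G * Rs * Gᴴ * Dᴴ * (Matrix.vecMulVec ψ (star ψ))ᵀ)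
      = x ⬝ᵥ (Rs *ᵥ star x) := by
    rw [aux_vecMulVec_transpose, aux_mul_vecMulVec, aux_trace_vecMulVec,
      dotProduct_comm]
    simp only [← Matrix.mulVec_mulVec]
    rw [Matrix.mulVec_mulVec (star ψ) Gᴴ Dᴴ, ← hsx,
      Matrix.mulVec_mulVec (Rs *ᵥ star x) D G,
      Matrix.dotProduct_mulVec, ← hx]
  -- second trace on the right-hand side
  have h2 : Matrix.trace (Dᴴ * Gc * W * Gᵀ * D * Matrix.vecMulVec ψ (star ψ))
      = star x ⬝ᵥ (W *ᵥ x) := by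
    rw [aux_mul_vecMulVec, aux_trace_vecMulVec, dotProduct_comm]
    simp only [← Matrix.mulVec_mulVec]
    rw [Matrix.mulVec_mulVec ψ Gᵀ D, hGDψ,
      Matrix.mulVec_mulVec (W *ᵥ x) Dᴴ Gc,
      Matrix.dotProduct_mulVec, hsx']
  rw [hLHS, h1, h2]
  ring
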